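/- The set Q_A of primitive words over an alphabet A with |A| ≥ 2 has natural density 1; equivalently, the set of non-primitive (imprimitive) words has natural density 0, since |complement(Q_A) ∩ A^n| ≤ 2√n · |A|^{⌊n/2⌋+1}. -/
import Mathlib


open Filter Topology

/-- Number of words of `L` of length `n`. -/
noncomputable def wordCount {A : Type*} (L : Set (List A)) (n : ℕ) : ℕ :=
  Nat.card {w : List A // w ∈ L ∧ w.length = n}

/-- `L` has natural density `α`. -/
def HasNatDensity {A : Type*} [Fintype A] (L : Set (List A)) (α : ℝ) : Prop :=
  Tendsto (fun n : ℕ => (wordCount L n : ℝ) / (Fintype.card A : ℝ) ^ n) atTop (nhds α)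

/-- `L` has (Cesàro) density `α`. -/
def HasCesaroDensity {A : Type*} [Fintype A] (L : Set (List A)) (α : ℝ) : Prop :=
  Tendsto (fun n : ℕ =>
      (∑ k ∈ Finset.range n, (wordCount L k : ℝ) / (Fintype.card A : ℝ) ^ k) / n)
    atTop (nhds α)

/-- `L` is a regular language (accepted by a DFA with finitely many states). -/
def IsRegularLang {A : Type*} (L : Set (List A)) : Prop :=
  ∃ (σ : Type) (_ : Fintype σ) (M : DFA A σ), ∀ w, w ∈ M.accepts ↔ w ∈ L

/-- A word is primitive if it is nonempty and not a power of any word other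
than itself. -/
def Primitive {A : Type*} (w : List A) : Prop :=
  w ≠ [] ∧ ∀ (u : List A) (n : ℕ), w = (List.replicate n u).flatten → u = w

lemma myGeomSum_le {c : ℕ} (hc : 2 ≤ c) (m : ℕ) : ∑ j ∈ Finset.range m, c ^ j ≤ c ^ m := by
  induction m with
  | zero => simp
  | succ m ih =>
    rw [Finset.sum_range_succ, pow_succ]
    have h1 : 1 ≤ c ^ m := Nat.one_le_pow _ _ (by omega)
    nlinarith

lemma card_len {A : Type*} [Fintype A] (n : ℕ) :
    Nat.card {w : List A // w.length = n} = Fintype.card A ^ n := by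
  have e : {w : List A // w.length = n} ≃ List.Vector A n := Equiv.refl _
  rw [Nat.card_congr e, Nat.card_eq_fintype_card, card_vector]

lemma count_split {A : Type*} [Fintype A] (n : ℕ) :
    wordCount {w : List A | Primitive w} n + wordCount {w : List A | ¬ Primitive w} n
      = Fintype.card A ^ n := by
  classical
  have e : {w : List A // w ∈ {w : List A | Primitive w} ∧ w.length = n}
      ⊕ {w : List A // w ∈ {w : List A | ¬ Primitive w} ∧ w.length = n}
      ≃ {w : List A // w.length = n} :=
  { toFun := fun x => match x with
      | .inl ⟨w, h⟩ => ⟨w, h.2⟩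
      | .inr ⟨w, h⟩ => ⟨w, h.2⟩
    invFun := fun v => if h : Primitive v.1 then .inl ⟨v.1, h, v.2⟩ else .inr ⟨v.1, h, v.2⟩
    left_inv := by
      rintro (⟨w, h⟩ | ⟨w, h⟩)
      · have hp : Primitive w := h.1
        dsimp only
        rw [dif_pos hp]
      · have hp : ¬ Primitive w := h.1
        dsimp only
        rw [dif_neg hp]
    right_inv := by
      rintro ⟨w, h⟩
      by_cases hp : Primitive w <;> simp [hp] }
  haveI : Finite {w : List A // w.length = n} :=
    Finite.of_equiv (List.Vector A n) (Equiv.refl _)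
  haveI hfin : Finite ({w : List A // w ∈ {w : List A | Primitive w} ∧ w.length = n}
      ⊕ {w : List A // w ∈ {w : List A | ¬ Primitive w} ∧ w.length = n}) :=
    Finite.of_equiv _ e.symm
  haveI : Finite {w : List A // w ∈ {w : List A | Primitive w} ∧ w.length = n} :=
    Finite.of_injective (fun w => e (Sum.inl w)) (e.injective.comp Sum.inl_injective)
  haveI : Finite {w : List A // w ∈ {w : List A | ¬ Primitive w} ∧ w.length = n} :=
    Finite.of_injective (fun w => e (Sum.inr w)) (e.injective.comp Sum.inr_injective)
  calc wordCount {w : List A | Primitive w} n + wordCount {w : List A | ¬ Primitive w} n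
      = Nat.card ({w : List A // w ∈ {w : List A | Primitive w} ∧ w.length = n}
        ⊕ {w : List A // w ∈ {w : List A | ¬ Primitive w} ∧ w.length = n}) :=
        (Nat.card_sum).symm
    _ = Nat.card {w : List A // w.length = n} := Nat.card_congr e
    _ = Fintype.card A ^ n := card_len n

lemma count_imprim_le {A : Type*} [Fintype A] (hc : 2 ≤ Fintype.card A)
    (n : ℕ) (hn : 1 ≤ n) :
    wordCount {w : List A | ¬ Primitive w} n ≤ Fintype.card A ^ (n / 2 + 1) := by
  classical
  have key : ∀ w : {w : List A // w ∈ {w : List A | ¬ Primitive w} ∧ w.length = n},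
      ∃ u : List A, u.length ≤ n / 2 ∧
        w.1 = (List.replicate (n / u.length) u).flatten := by
    rintro ⟨w, hw, hlen⟩
    have hne : w ≠ [] := by
      intro h; subst h; simp at hlen; omega
    have hw' : ¬ (w ≠ [] ∧ ∀ (u : List A) (k : ℕ),
        w = (List.replicate k u).flatten → u = w) := hw
    push_neg at hw'
    obtain ⟨u, k, hrep, hne'⟩ := hw' hne
    have hul : w.length = k * u.length := by
      simp [hrep, List.length_flatten, List.map_replicate, List.sum_replicate, smul_eq_mul]
    have hu0 : u ≠ [] := by
      rintro rfl
      apply hne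
      simpa using hrep
    have hu1 : 1 ≤ u.length := List.length_pos_iff.mpr hu0
    have hk2 : 2 ≤ k := by
      rcases k with _ | _ | k
      · exfalso; apply hne; simpa using hrep
      · exfalso; apply hne'; symm; simpa using hrep
      · omega
    have h2u : 2 * u.length ≤ n := by
      have := Nat.mul_le_mul_right u.length hk2
      omega
    refine ⟨u, by omega, ?_⟩
    have hdiv : n / u.length = k := by
      rw [hlen] at hul
      rw [hul, Nat.mul_div_cancel _ (by omega)]
    rw [hdiv]; exact hrep
  choose u hu2 hu3 using key
  have hf : Function.Injective
      (fun w : {w : List A // w ∈ {w : List A | ¬ Primitive w} ∧ w.length = n} =>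
        (⟨⟨(u w).length, Nat.lt_succ_of_le (hu2 w)⟩, ⟨u w, rfl⟩⟩ :
          Σ j : Fin (n / 2 + 1), List.Vector A (j : ℕ))) := by
    intro w1 w2 h
    have h2 : u w1 = u w2 :=
      congrArg (fun x : Σ j : Fin (n / 2 + 1), List.Vector A (j : ℕ) => x.2.1) h
    apply Subtype.ext
    rw [hu3 w1, h2, ← hu3 w2]
  have hcard : Nat.card {w : List A // w ∈ {w : List A | ¬ Primitive w} ∧ w.length = n}
      ≤ Nat.card (Σ j : Fin (n / 2 + 1), List.Vector A (j : ℕ)) :=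
    Nat.card_le_card_of_injective _ hf
  have hT : Nat.card (Σ j : Fin (n / 2 + 1), List.Vector A (j : ℕ))
      = ∑ j ∈ Finset.range (n / 2 + 1), Fintype.card A ^ j := by
    rw [Nat.card_eq_fintype_card, Fintype.card_sigma]
    simp only [card_vector]
    exact Fin.sum_univ_eq_sum_range (fun j => Fintype.card A ^ j) _
  calc wordCount {w : List A | ¬ Primitive w} n
      = Nat.card {w : List A // w ∈ {w : List A | ¬ Primitive w} ∧ w.length = n} := rfl
    _ ≤ ∑ j ∈ Finset.range (n / 2 + 1), Fintype.card A ^ j := by rw [← hT]; exact hcard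
    _ ≤ Fintype.card A ^ (n / 2 + 1) := myGeomSum_le hc _

/-- The set of primitive words has natural density `1`. -/
theorem stmt18 {A : Type*} [Fintype A] (hA : 2 ≤ Fintype.card A) :
    HasNatDensity {w : List A | Primitive w} 1 := by
  set c : ℝ := (Fintype.card A : ℝ) with hcdef
  have hc1 : (1 : ℝ) < c := by
    rw [hcdef]; exact_mod_cast lt_of_lt_of_le one_lt_two hA
  have hc0 : (0 : ℝ) < c := lt_trans one_pos hc1
  have hsplit : ∀ n : ℕ, (wordCount {w : List A | Primitive w} n : ℝ) / c ^ n
      = 1 - (wordCount {w : List A | ¬ Primitive w} n : ℝ) / c ^ n := by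
    intro n
    have h := count_split (A := A) n
    have h2 : (wordCount {w : List A | Primitive w} n : ℝ)
        + (wordCount {w : List A | ¬ Primitive w} n : ℝ) = c ^ n := by
      rw [hcdef]
      exact_mod_cast congrArg (Nat.cast : ℕ → ℝ) h
    have hpn : (0 : ℝ) < c ^ n := pow_pos hc0 n
    field_simp
    linarith
  have htop : Tendsto (fun n : ℕ => n - (n / 2 + 1)) atTop atTop := by
    apply tendsto_atTop_atTop.mpr
    intro b
    exact ⟨2 * b + 2, fun n hn => by omega⟩
  have hbt : Tendsto (fun n : ℕ => (1 / c) ^ (n - (n / 2 + 1))) atTop (nhds 0) := by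
    apply (tendsto_pow_atTop_nhds_zero_of_lt_one (by positivity) ?_).comp htop
    rw [div_lt_one hc0]; exact hc1
  have h0 : Tendsto (fun n : ℕ =>
      (wordCount {w : List A | ¬ Primitive w} n : ℝ) / c ^ n) atTop (nhds 0) := by
    apply squeeze_zero' ?_ ?_ hbt
    · filter_upwards with n
      positivity
    · filter_upwards [eventually_ge_atTop 1] with n hn
      have hb := count_imprim_le (A := A) hA n hn
      have hbr : (wordCount {w : List A | ¬ Primitive w} n : ℝ) ≤ c ^ (n / 2 + 1) := by
        rw [hcdef]; exact_mod_cast hb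
      have hpn : (0 : ℝ) < c ^ n := pow_pos hc0 n
      have hle : (wordCount {w : List A | ¬ Primitive w} n : ℝ) / c ^ n
          ≤ c ^ (n / 2 + 1) / c ^ n := by gcongr
      refine hle.trans (le_of_eq ?_)
      have hm : (n / 2 + 1) + (n - (n / 2 + 1)) = n := by omega
      have hcn : c ^ n = c ^ (n / 2 + 1) * c ^ (n - (n / 2 + 1)) := by
        rw [← pow_add, hm]
      rw [hcn, one_div, inv_pow]
      rw [div_eq_iff (by positivity), inv_mul_eq_div, eq_div_iff (by positivity)]
  have hfinal := (tendsto_const_nhds (x := (1 : ℝ)) (f := atTop)).sub h0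
  rw [sub_zero] at hfinal
  unfold HasNatDensity
  refine hfinal.congr fun n => ?_
  rw [← hcdef, hsplit n]
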